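/- arXiv:1810.08416 — 3 statements merged into one kernel-verified Lean document; each statement's English description precedes it below -/
import Mathlib

section
/- Let $r \geq 4$ be even and let $\varphi_3$ be the collection of transversals $Z$ of the pairs $\{x_i,y_i\}$, $1\leq i\leq r$, with $|Z \cap \{y_1,\dots,y_r\}|$ odd. Then for any two members $C_1, C_2 \in \varphi_3$, the intersection $C_1 \cap C_2$ has even cardinality. -/
def groundE {α : Type*} [DecidableEq α] (r : ℕ) (x y : Fin r → α) (t : α) : Finset α :=
  (Finset.univ.image x) ∪ (Finset.univ.image y) ∪ {t}

/-- φ₃: transversals of the pairs {xᵢ,yᵢ} (one element from each pair, so r elements,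
not containing t) that contain an odd number of the yᵢ. -/
def phi3 {α : Type*} [DecidableEq α] (r : ℕ) (x y : Fin r → α) (t : α) : Set (Finset α) :=
  {Z | Z ⊆ groundE r x y t ∧ Z.card = r ∧
    Odd ((Z ∩ Finset.univ.image y).card) ∧
    ∀ i : Fin r, (Z ∩ {x i, y i}).card = 1}

lemma phi3_choice {α : Type*} [DecidableEq α] {r : ℕ} {x y : Fin r → α} {t : α}
    (hxy : ∀ i j, x i ≠ y j) (hxinj : Function.Injective x)
    (hyinj : Function.Injective y)
    {Z : Finset α} (hZ : Z ∈ phi3 r x y t) :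
    ∃ c : Fin r → α, (∀ i, c i = x i ∨ c i = y i) ∧ Z = Finset.univ.image c := by
  obtain ⟨hsub, hcard, hodd, hpair⟩ := hZ
  choose c hc using fun i => Finset.card_eq_one.mp (hpair i)
  have hmem : ∀ i, c i ∈ Z ∩ {x i, y i} := by
    intro i; rw [hc i]; exact Finset.mem_singleton_self _
  have hor : ∀ i, c i = x i ∨ c i = y i := by
    intro i
    have := (Finset.mem_inter.mp (hmem i)).2
    simpa using this
  have hcinj : Function.Injective c := by
    intro i j hij
    rcases hor i with h1 | h1 <;> rcases hor j with h2 | h2 <;>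
      rw [h1, h2] at hij
    · exact hxinj hij
    · exact absurd hij (hxy i j)
    · exact absurd hij.symm (hxy j i)
    · exact hyinj hij
  refine ⟨c, hor, ?_⟩
  have hsub' : Finset.univ.image c ⊆ Z := by
    intro a ha
    obtain ⟨i, _, rfl⟩ := Finset.mem_image.mp ha
    exact (Finset.mem_inter.mp (hmem i)).1
  refine (Finset.eq_of_subset_of_card_le hsub' ?_).symm
  rw [Finset.card_image_of_injective _ hcinj, Finset.card_univ, Fintype.card_fin, hcard]

theorem stmt_3 {α : Type*} [DecidableEq α] (r : ℕ) (hr : 4 ≤ r) (heven : Even r)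
    (x y : Fin r → α) (t : α)
    (hinj : Function.Injective (Sum.elim x (Sum.elim y (fun _ : Unit => t))))
    (C₁ C₂ : Finset α) (h₁ : C₁ ∈ phi3 r x y t) (h₂ : C₂ ∈ phi3 r x y t) :
    Even ((C₁ ∩ C₂).card) := by
  classical
  have hxy : ∀ i j, x i ≠ y j := by
    intro i j h
    have := hinj (a₁ := Sum.inl i) (a₂ := Sum.inr (Sum.inl j)) (by simpa using h)
    simp at this
  have hxinj : Function.Injective x := by
    intro i j h
    have := hinj (a₁ := Sum.inl i) (a₂ := Sum.inl j) (by simpa using h)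
    simpa using this
  have hyinj : Function.Injective y := by
    intro i j h
    have := hinj (a₁ := Sum.inr (Sum.inl i)) (a₂ := Sum.inr (Sum.inl j)) (by simpa using h)
    simpa using this
  obtain ⟨c₁, hor₁, hC₁⟩ := phi3_choice hxy hxinj hyinj h₁
  obtain ⟨c₂, hor₂, hC₂⟩ := phi3_choice hxy hxinj hyinj h₂
  set S₁ : Finset (Fin r) := Finset.univ.filter (fun i => c₁ i = y i) with hS₁
  set S₂ : Finset (Fin r) := Finset.univ.filter (fun i => c₂ i = y i) with hS₂
  set T : Finset (Fin r) := Finset.univ.filter (fun i => c₁ i = c₂ i) with hT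
  -- cardinality of C ∩ image y is |S|
  have keyS : ∀ (c : Fin r → α), (∀ i, c i = x i ∨ c i = y i) →
      (Finset.univ.image c ∩ Finset.univ.image y)
        = (Finset.univ.filter (fun i => c i = y i)).image y := by
    intro c hor
    ext a
    simp only [Finset.mem_inter, Finset.mem_image, Finset.mem_filter, Finset.mem_univ,
      true_and]
    constructor
    · rintro ⟨⟨i, rfl⟩, ⟨j, hj⟩⟩
      rcases hor i with h | h
      · exact absurd hj.symm (by rw [h] at hj ⊢; exact hxy i j)
      · exact ⟨i, h, h.symm⟩
    · rintro ⟨i, hi, rfl⟩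
      exact ⟨⟨i, hi⟩, ⟨i, rfl⟩⟩
  have hodd₁ : Odd S₁.card := by
    have := h₁.2.2.1
    rw [hC₁, keyS c₁ hor₁, Finset.card_image_of_injective _ hyinj] at this
    exact this
  have hodd₂ : Odd S₂.card := by
    have := h₂.2.2.1
    rw [hC₂, keyS c₂ hor₂, Finset.card_image_of_injective _ hyinj] at this
    exact this
  have hcinj₁ : Function.Injective c₁ := by
    intro i j hij
    rcases hor₁ i with h1 | h1 <;> rcases hor₁ j with h2 | h2 <;> rw [h1, h2] at hij
    · exact hxinj hij
    · exact absurd hij (hxy i j)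
    · exact absurd hij.symm (hxy j i)
    · exact hyinj hij
  -- C₁ ∩ C₂ = T.image c₁
  have hinterT : C₁ ∩ C₂ = T.image c₁ := by
    rw [hC₁, hC₂]
    ext a
    simp only [Finset.mem_inter, Finset.mem_image, Finset.mem_filter, Finset.mem_univ,
      true_and, hT]
    constructor
    · rintro ⟨⟨i, rfl⟩, ⟨j, hj⟩⟩
      have hij : i = j := by
        rcases hor₁ i with h1 | h1 <;> rcases hor₂ j with h2 | h2 <;>
          rw [h1, h2] at hj
        · exact hxinj hj.symm
        · exact absurd hj.symm (hxy i j)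
        · exact absurd hj (hxy j i)
        · exact hyinj hj.symm
      subst hij
      exact ⟨i, hj.symm, rfl⟩
    · rintro ⟨i, hi, rfl⟩
      exact ⟨⟨i, rfl⟩, ⟨i, hi.symm⟩⟩
  have hcardT : (C₁ ∩ C₂).card = T.card := by
    rw [hinterT, Finset.card_image_of_injective _ hcinj₁]
  -- T = (S₁ ∩ S₂) ∪ (S₁ ∪ S₂)ᶜ
  have hTeq : T = (S₁ ∩ S₂) ∪ (S₁ ∪ S₂)ᶜ := by
    ext i
    simp only [hT, hS₁, hS₂, Finset.mem_filter, Finset.mem_univ, true_and,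
      Finset.mem_union, Finset.mem_inter, Finset.mem_compl, not_or]
    have hne : x i ≠ y i := hxy i i
    rcases hor₁ i with h1 | h1 <;> rcases hor₂ i with h2 | h2 <;>
      rw [h1, h2] <;> simp [hne, hne.symm]
  have hdisj : Disjoint (S₁ ∩ S₂) (S₁ ∪ S₂)ᶜ := by
    refine Finset.disjoint_left.mpr ?_
    intro i hi hic
    rw [Finset.mem_compl] at hic
    exact hic (Finset.mem_union_left _ (Finset.mem_inter.mp hi).1)
  have hTcard : T.card = (S₁ ∩ S₂).card + (S₁ ∪ S₂)ᶜ.card := by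
    rw [hTeq, Finset.card_union_of_disjoint hdisj]
  have hcompl : (S₁ ∪ S₂)ᶜ.card = r - (S₁ ∪ S₂).card := by
    rw [Finset.card_compl, Fintype.card_fin]
  have hle : (S₁ ∪ S₂).card ≤ r := by
    simpa using Finset.card_le_univ (S₁ ∪ S₂)
  have hiu : (S₁ ∪ S₂).card + (S₁ ∩ S₂).card = S₁.card + S₂.card :=
    Finset.card_union_add_card_inter S₁ S₂
  rw [hcardT]
  rw [Nat.even_iff] at heven ⊢
  rw [Nat.odd_iff] at hodd₁ hodd₂
  omega
end

section
/- Let $r \geq 3$. The rank-$r$ binary spike $Z_r$, represented over $GF(2)$ by the $r \times (2r+1)$ matrix $[I_r \mid J_r - I_r \mid \mathbf{1}]$ (columns labeled $x_1,\dots,x_r,y_1,\dots,y_r,t$, where $J_r$ is the all-ones matrix), has exactly $2^r + \frac{r(r+1)}{2}$ circuits. -/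
/-- Index type for the columns of the binary spike matrix: `inl i ↦ xᵢ`,
`inr (inl i) ↦ yᵢ`, `inr (inr ()) ↦ t`. -/
abbrev SpikeIdx (r : ℕ) := Fin r ⊕ Fin r ⊕ Unit

/-- Columns of the matrix `[I_r | J_r - I_r | 1]` over GF(2). -/
def spikeCol (r : ℕ) : SpikeIdx r → (Fin r → ZMod 2)
  | Sum.inl i => fun j => if j = i then 1 else 0
  | Sum.inr (Sum.inl i) => fun j => if j = i then 0 else 1
  | Sum.inr (Sum.inr _) => fun _ => 1

/-- A set of columns is dependent if the columns are not linearly independent. -/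
def SpikeDep (r : ℕ) (S : Finset (SpikeIdx r)) : Prop :=
  ¬ LinearIndependent (ZMod 2) (fun i : {a // a ∈ S} => spikeCol r i.1)

/-- A circuit of the vector matroid `Z_r`: a minimal dependent set of columns. -/
def SpikeCircuit (r : ℕ) (S : Finset (SpikeIdx r)) : Prop :=
  SpikeDep r S ∧ ∀ T ⊂ S, ¬ SpikeDep r T

open Finset in
section
namespace SpikeAux
variable {r : ℕ}

/-- build a set of columns from the x-part, y-part and the t-flag. -/
def mkS (A B : Finset (Fin r)) (ε : Bool) : Finset (SpikeIdx r) :=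
  A.image Sum.inl ∪ B.image (fun i => Sum.inr (Sum.inl i)) ∪
    (if ε then {Sum.inr (Sum.inr ())} else ∅)

lemma inl_mem_mkS {A B : Finset (Fin r)} {ε : Bool} {i : Fin r} :
    Sum.inl i ∈ mkS A B ε ↔ i ∈ A := by
  unfold mkS; split_ifs <;> simp

lemma inrl_mem_mkS {A B : Finset (Fin r)} {ε : Bool} {i : Fin r} :
    Sum.inr (Sum.inl i) ∈ mkS A B ε ↔ i ∈ B := by
  unfold mkS; split_ifs <;> simp

lemma inrr_mem_mkS {A B : Finset (Fin r)} {ε : Bool} :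
    Sum.inr (Sum.inr ()) ∈ mkS A B ε ↔ ε = true := by
  unfold mkS; split_ifs with h <;> simp [h]

lemma exists_mkS (S : Finset (SpikeIdx r)) : ∃ A B ε, S = mkS A B ε := by
  classical
  refine ⟨univ.filter (fun i => Sum.inl i ∈ S), univ.filter (fun i => Sum.inr (Sum.inl i) ∈ S),
    decide (Sum.inr (Sum.inr ()) ∈ S), ?_⟩
  ext x
  rcases x with i | i | u
  · simp [inl_mem_mkS]
  · simp [inrl_mem_mkS]
  · cases u; simp [inrr_mem_mkS]

lemma mkS_subset_mkS {A B A' B' : Finset (Fin r)} {ε ε' : Bool} :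
    mkS A B ε ⊆ mkS A' B' ε' ↔ A ⊆ A' ∧ B ⊆ B' ∧ (ε = true → ε' = true) := by
  constructor
  · intro h
    refine ⟨fun i hi => inl_mem_mkS.mp (h (inl_mem_mkS.mpr hi)),
      fun i hi => inrl_mem_mkS.mp (h (inrl_mem_mkS.mpr hi)),
      fun hε => inrr_mem_mkS.mp (h (inrr_mem_mkS.mpr hε))⟩
  · rintro ⟨h1, h2, h3⟩ x hx
    rcases x with i | i | u
    · exact inl_mem_mkS.mpr (h1 (inl_mem_mkS.mp hx))
    · exact inrl_mem_mkS.mpr (h2 (inrl_mem_mkS.mp hx))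
    · cases u; exact inrr_mem_mkS.mpr (h3 (inrr_mem_mkS.mp hx))

lemma mkS_inj {A B A' B' : Finset (Fin r)} {ε ε' : Bool} :
    mkS A B ε = mkS A' B' ε' ↔ A = A' ∧ B = B' ∧ ε = ε' := by
  constructor
  · intro h
    have h1 := mkS_subset_mkS.mp (le_of_eq h)
    have h2 := mkS_subset_mkS.mp (le_of_eq h.symm)
    refine ⟨subset_antisymm h1.1 h2.1, subset_antisymm h1.2.1 h2.2.1, ?_⟩
    cases ε <;> cases ε' <;> simp_all
  · rintro ⟨rfl, rfl, rfl⟩; rfl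

lemma mkS_nonempty {A B : Finset (Fin r)} {ε : Bool} :
    (mkS A B ε).Nonempty ↔ A.Nonempty ∨ B.Nonempty ∨ ε = true := by
  constructor
  · rintro ⟨x, hx⟩
    rcases x with i | i | u
    · exact Or.inl ⟨i, inl_mem_mkS.mp hx⟩
    · exact Or.inr (Or.inl ⟨i, inrl_mem_mkS.mp hx⟩)
    · cases u; exact Or.inr (Or.inr (inrr_mem_mkS.mp hx))
  · rintro (⟨i, hi⟩ | ⟨i, hi⟩ | hε)
    · exact ⟨Sum.inl i, inl_mem_mkS.mpr hi⟩
    · exact ⟨Sum.inr (Sum.inl i), inrl_mem_mkS.mpr hi⟩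
    · exact ⟨Sum.inr (Sum.inr ()), inrr_mem_mkS.mpr hε⟩

end SpikeAux

namespace SpikeAux
variable {r : ℕ}

lemma sum_mkS {M : Type*} [AddCommMonoid M] (A B : Finset (Fin r)) (ε : Bool)
    (f : SpikeIdx r → M) :
    ∑ x ∈ mkS A B ε, f x = (∑ i ∈ A, f (Sum.inl i)) + (∑ i ∈ B, f (Sum.inr (Sum.inl i)))
      + (if ε then f (Sum.inr (Sum.inr ())) else 0) := by
  unfold mkS
  rw [Finset.sum_union, Finset.sum_union, Finset.sum_image (by intros a _ b _ h; exact Sum.inl.inj h),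
    Finset.sum_image (by intros a _ b _ h; exact Sum.inl.inj (Sum.inr.inj h))]
  · congr 1
    split_ifs <;> simp
  · rw [Finset.disjoint_left]; intro x hx hx'
    simp only [Finset.mem_image] at hx hx'
    obtain ⟨a, -, rfl⟩ := hx
    obtain ⟨b, -, hb⟩ := hx'
    exact absurd hb (by simp)
  · rw [Finset.disjoint_left]; intro x hx hx'
    split_ifs at hx' <;> simp_all

/-- the sum of the chosen columns, evaluated at coordinate `j`. -/
lemma sum_spike_mkS (A B : Finset (Fin r)) (ε : Bool) (j : Fin r) :
    (∑ x ∈ mkS A B ε, spikeCol r x) j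
      = (if j ∈ A then 1 else 0) + (if j ∈ B then 1 else 0)
        + ((B.card : ZMod 2) + (if ε then 1 else 0)) := by
  rw [Finset.sum_apply, sum_mkS A B ε (fun x => spikeCol r x j)]
  have h1 : ∑ i ∈ A, spikeCol r (Sum.inl i) j = (if j ∈ A then 1 else 0) := by
    simp [spikeCol, Finset.sum_ite_eq]
  have h2 : ∑ i ∈ B, spikeCol r (Sum.inr (Sum.inl i)) j
      = (if j ∈ B then 1 else 0) + (B.card : ZMod 2) := by
    have : ∀ i ∈ B, spikeCol r (Sum.inr (Sum.inl i)) j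
        = (if j = i then (1 : ZMod 2) else 0) + 1 := by
      intro i _
      simp only [spikeCol]
      split_ifs <;> decide
    rw [Finset.sum_congr rfl this, Finset.sum_add_distrib]
    simp [Finset.sum_ite_eq]
  rw [h1, h2]
  have h3 : (if ε then spikeCol r (Sum.inr (Sum.inr ())) j else 0)
      = (if ε then (1 : ZMod 2) else 0) := by split_ifs <;> simp [spikeCol]
  rw [h3]; ring

end SpikeAux

namespace SpikeAux
variable {r : ℕ}

/-- zero-sum nonempty set. -/
def ZS (S : Finset (SpikeIdx r)) : Prop :=
  S.Nonempty ∧ ∑ x ∈ S, spikeCol r x = 0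

lemma zmod2_cases : ∀ x : ZMod 2, x = 0 ∨ x = 1 := by decide

lemma zmod2_ne_zero : ∀ x : ZMod 2, x ≠ 0 → x = 1 := by decide

lemma spikeDep_iff (S : Finset (SpikeIdx r)) :
    SpikeDep r S ↔ ∃ T ⊆ S, ZS T := by
  classical
  rw [SpikeDep, Fintype.not_linearIndependent_iff]
  constructor
  · rintro ⟨g, hg, i₀, hi₀⟩
    refine ⟨(S.attach.filter fun a => g a ≠ 0).image Subtype.val, ?_, ?_, ?_⟩
    · intro x hx
      simp only [Finset.mem_image, Finset.mem_filter] at hx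
      obtain ⟨a, _, rfl⟩ := hx
      exact a.2
    · refine ⟨i₀.1, ?_⟩
      simp only [Finset.mem_image, Finset.mem_filter]
      exact ⟨i₀, ⟨Finset.mem_attach _ _, hi₀⟩, rfl⟩
    · rw [Finset.sum_image (by intro a _ b _ h; exact Subtype.ext h)]
      calc ∑ a ∈ S.attach.filter (fun a => g a ≠ 0), spikeCol r a.1
          = ∑ a ∈ S.attach.filter (fun a => g a ≠ 0), g a • spikeCol r a.1 := by
            refine Finset.sum_congr rfl fun a ha => ?_
            rw [zmod2_ne_zero _ (Finset.mem_filter.mp ha).2, one_smul]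
        _ = ∑ a ∈ S.attach, g a • spikeCol r a.1 := by
            refine Finset.sum_filter_of_ne fun a _ h => ?_
            intro h0; exact h (by rw [h0, zero_smul])
        _ = 0 := by rw [← hg]; rw [← Finset.univ_eq_attach]
  · rintro ⟨T, hTS, ⟨x₀, hx₀⟩, hsum⟩
    refine ⟨fun a => if a.1 ∈ T then 1 else 0, ?_, ⟨x₀, hTS hx₀⟩, by simp [hx₀]⟩
    rw [Finset.univ_eq_attach]
    calc ∑ a ∈ S.attach, (if a.1 ∈ T then (1 : ZMod 2) else 0) • spikeCol r a.1
        = ∑ a ∈ S.attach, (if a.1 ∈ T then spikeCol r a.1 else 0) := by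
          refine Finset.sum_congr rfl fun a _ => ?_
          split_ifs <;> simp
      _ = ∑ x ∈ S, (if x ∈ T then spikeCol r x else 0) :=
          Finset.sum_attach S (fun x => if x ∈ T then spikeCol r x else 0)
      _ = ∑ x ∈ S ∩ T, spikeCol r x := by rw [Finset.sum_ite_mem]
      _ = 0 := by rw [Finset.inter_eq_right.mpr hTS, hsum]

lemma spikeCircuit_iff_min (S : Finset (SpikeIdx r)) :
    SpikeCircuit r S ↔ ZS S ∧ ∀ T ⊂ S, ¬ ZS T := by
  constructor
  · rintro ⟨hdep, hmin⟩
    have hmin' : ∀ T ⊂ S, ¬ ZS T := fun T hT hzs =>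
      hmin T hT ((spikeDep_iff T).mpr ⟨T, le_refl T, hzs⟩)
    obtain ⟨T, hTS, hzsT⟩ := (spikeDep_iff S).mp hdep
    rcases eq_or_ne T S with rfl | hne
    · exact ⟨hzsT, hmin'⟩
    · exact absurd hzsT (hmin' T (lt_of_le_of_ne hTS hne))
  · rintro ⟨hzs, hmin⟩
    refine ⟨(spikeDep_iff S).mpr ⟨S, le_refl S, hzs⟩, fun T hT hdep => ?_⟩
    obtain ⟨T', hT'T, hzsT'⟩ := (spikeDep_iff T).mp hdep
    exact hmin T' (lt_of_le_of_lt hT'T hT) hzsT'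

/-- characterization of zero-sum sets in terms of components. -/
lemma zs_mkS (hr : 1 ≤ r) (A B : Finset (Fin r)) (ε : Bool) :
    ZS (mkS A B ε) ↔
      (A = B ∧ A.Nonempty ∧ (B.card : ZMod 2) + (if ε then 1 else 0) = 0) ∨
      (A = Bᶜ ∧ (B.card : ZMod 2) + (if ε then 1 else 0) = 1) := by
  set c : ZMod 2 := (B.card : ZMod 2) + (if ε then 1 else 0) with hc
  have hzero : (∑ x ∈ mkS A B ε, spikeCol r x = 0) ↔
      ∀ j, (if j ∈ A then (1:ZMod 2) else 0) + (if j ∈ B then 1 else 0) + c = 0 := by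
    constructor
    · intro h j
      have := congrFun h j
      rwa [sum_spike_mkS] at this
    · intro h
      funext j
      rw [sum_spike_mkS]; exact h j
  constructor
  · rintro ⟨hne, hsum⟩
    have h := hzero.mp hsum
    rcases zmod2_cases c with hc0 | hc1
    · left
      have hAB : A = B := by
        ext j
        have := h j
        rw [hc0, add_zero] at this
        by_cases hA : j ∈ A <;> by_cases hB : j ∈ B <;> simp [hA, hB] at this ⊢
      refine ⟨hAB, ?_, hc0⟩
      by_contra hA
      rw [Finset.not_nonempty_iff_eq_empty] at hA
      have hB : B = ∅ := hAB ▸ hA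
      have hε : ε = false := by
        cases ε
        · rfl
        · exfalso
          rw [hc, hB] at hc0
          simp only [Finset.card_empty, Nat.cast_zero, if_true, zero_add] at hc0
          exact one_ne_zero hc0
      rw [hA, hB, hε] at hne
      exact absurd (mkS_nonempty.mp hne) (by simp)
    · right
      refine ⟨?_, hc1⟩
      ext j
      have := h j
      rw [hc1] at this
      by_cases hA : j ∈ A <;> by_cases hB : j ∈ B <;>
        simp [hA, hB] at this ⊢ <;> first | rfl | (exfalso; revert this; decide)
  · rintro (⟨rfl, hA, hc0⟩ | ⟨rfl, hc1⟩)
    · refine ⟨mkS_nonempty.mpr (Or.inl hA), hzero.mpr fun j => ?_⟩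
      rw [hc0]
      by_cases hj : j ∈ A <;> simp [hj] <;> decide
    · refine ⟨mkS_nonempty.mpr ?_, hzero.mpr fun j => ?_⟩
      · have : (univ : Finset (Fin r)).Nonempty := by
          rw [Finset.univ_nonempty_iff]
          exact Fin.pos_iff_nonempty.mp hr
        obtain ⟨j, _⟩ := this
        by_cases hj : j ∈ B
        · exact Or.inr (Or.inl ⟨j, hj⟩)
        · exact Or.inl ⟨j, Finset.mem_compl.mpr hj⟩
      · rw [hc1]
        by_cases hj : j ∈ B <;> simp [hj] <;> decide

end SpikeAux

namespace SpikeAux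
variable {r : ℕ}

lemma natCast_zmod2_zero (n : ℕ) : ((n : ZMod 2) = 0) ↔ Even n := by
  rw [ZMod.natCast_eq_zero_iff]
  constructor
  · rintro ⟨c, rfl⟩; exact ⟨c, by ring⟩
  · rintro ⟨c, rfl⟩; exact ⟨c, by ring⟩

lemma natCast_zmod2_one (n : ℕ) : ((n : ZMod 2) = 1) ↔ ¬ Even n := by
  constructor
  · intro h he
    rw [(natCast_zmod2_zero n).mpr he] at h
    exact zero_ne_one h
  · intro he
    rcases zmod2_cases (n : ZMod 2) with h | h
    · exact absurd ((natCast_zmod2_zero n).mp h) he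
    · exact h

lemma c_zero_iff (n : ℕ) (ε : Bool) :
    ((n : ZMod 2) + (if ε then 1 else 0) = 0) ↔ (ε = decide (¬ Even n)) := by
  by_cases h : Even n
  · rw [(natCast_zmod2_zero n).mpr h, zero_add]
    cases ε <;> simp [h]
  · rw [(natCast_zmod2_one n).mpr h]
    cases ε <;> simp [h] <;> decide

lemma c_one_iff (n : ℕ) (ε : Bool) :
    ((n : ZMod 2) + (if ε then 1 else 0) = 1) ↔ (ε = decide (Even n)) := by
  by_cases h : Even n
  · rw [(natCast_zmod2_zero n).mpr h, zero_add]
    cases ε <;> simp [h] <;> decide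
  · rw [(natCast_zmod2_one n).mpr h]
    cases ε <;> simp [h] <;> decide

lemma mkS_ssubset {A B A' B' : Finset (Fin r)} {ε ε' : Bool} :
    mkS A' B' ε' ⊂ mkS A B ε ↔
      (A' ⊆ A ∧ B' ⊆ B ∧ (ε' = true → ε = true)) ∧ ¬ (A' = A ∧ B' = B ∧ ε' = ε) := by
  rw [Finset.ssubset_iff_subset_ne, mkS_subset_mkS, ne_eq, mkS_inj]

lemma minZS_mkS (hr : 3 ≤ r) (A B : Finset (Fin r)) (ε : Bool) :
    (ZS (mkS A B ε) ∧ ∀ T ⊂ mkS A B ε, ¬ ZS T) ↔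
      ((A = B ∧ A.card = 1 ∧ ε = true) ∨ (A = B ∧ A.card = 2 ∧ ε = false) ∨
        (A = Bᶜ ∧ ε = decide (Even B.card))) := by
  have hr1 : 1 ≤ r := by omega
  constructor
  · rintro ⟨hzs, hmin⟩
    rcases (zs_mkS hr1 A B ε).mp hzs with ⟨rfl, hA, hc⟩ | ⟨rfl, hc⟩
    · -- case A = B
      rw [c_zero_iff] at hc
      have hcard : A.card ≤ 2 := by
        by_contra hgt
        push_neg at hgt
        obtain ⟨i, hi, j, hj, hij⟩ := Finset.one_lt_card.mp (show 1 < A.card by omega)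
        have hpair : ({i, j} : Finset (Fin r)).card = 2 := Finset.card_pair hij
        have hsub : ({i, j} : Finset (Fin r)) ⊆ A := by
          intro x hx; rcases Finset.mem_insert.mp hx with rfl | hx
          · exact hi
          · exact (Finset.mem_singleton.mp hx) ▸ hj
        refine hmin (mkS {i, j} {i, j} false) ?_ ?_
        · rw [mkS_ssubset]
          refine ⟨⟨hsub, hsub, by simp⟩, ?_⟩
          rintro ⟨h, -, -⟩
          rw [← h, hpair] at hgt
          omega
        · refine (zs_mkS hr1 _ _ _).mpr (Or.inl ⟨rfl, ?_, ?_⟩)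
          · exact ⟨i, Finset.mem_insert_self i {j}⟩
          · rw [c_zero_iff, hpair]
            simp
      interval_cases h : A.card
      · exact absurd (Finset.card_eq_zero.mp h ▸ hA) (by simp)
      · left
        refine ⟨rfl, rfl, ?_⟩
        rw [hc]
        simp [Nat.even_iff]
      · right; left
        refine ⟨rfl, rfl, ?_⟩
        rw [hc]
        simp [Nat.even_iff]
    · -- case A = Bᶜ
      rw [c_one_iff] at hc
      exact Or.inr (Or.inr ⟨rfl, hc⟩)
  · -- backward
    have cover : ∀ {A' B' : Finset (Fin r)}, A' = B'ᶜ → (Finset.univ : Finset (Fin r)) ⊆ A' ∪ B' := by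
      rintro A' B' rfl x -
      rw [Finset.mem_union, Finset.mem_compl]
      exact (em _).symm.imp id id
    rintro (⟨rfl, hA1, rfl⟩ | ⟨rfl, hA2, rfl⟩ | ⟨rfl, hε⟩)
    · -- {x i, y i, t} : A = B, card 1, ε = true
      constructor
      · refine (zs_mkS hr1 _ _ _).mpr (Or.inl ⟨rfl, Finset.card_pos.mp (by omega), ?_⟩)
        rw [c_zero_iff, hA1]
        simp [Nat.even_iff]
      · intro T hT hzsT
        obtain ⟨A', B', ε', rfl⟩ := exists_mkS T
        rw [mkS_ssubset] at hT
        obtain ⟨⟨hA', hB', hε'⟩, hne⟩ := hT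
        rcases (zs_mkS hr1 A' B' ε').mp hzsT with ⟨rfl, hA'ne, hc'⟩ | ⟨rfl, hc'⟩
        · have hAeq : A' = A := Finset.eq_of_subset_of_card_le hA'
            (by rw [hA1]; exact hA'ne.card_pos)
          apply hne
          refine ⟨hAeq, hAeq, ?_⟩
          rw [c_zero_iff] at hc'
          rw [hc', hAeq, hA1]
          simp [Nat.even_iff]
        · have hcov := Finset.card_le_card
            ((cover rfl).trans (Finset.union_subset_union hA' hB'))
          rw [Finset.card_univ, Fintype.card_fin, Finset.union_self, hA1] at hcov
          omega
    · -- {x i, x j, y i, y j} : A = B, card 2, ε = false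
      constructor
      · refine (zs_mkS hr1 _ _ _).mpr (Or.inl ⟨rfl, Finset.card_pos.mp (by omega), ?_⟩)
        rw [c_zero_iff, hA2]
        simp
      · intro T hT hzsT
        obtain ⟨A', B', ε', rfl⟩ := exists_mkS T
        rw [mkS_ssubset] at hT
        obtain ⟨⟨hA', hB', hε'⟩, hne⟩ := hT
        rcases (zs_mkS hr1 A' B' ε').mp hzsT with ⟨rfl, hA'ne, hc'⟩ | ⟨rfl, hc'⟩
        · have hε'f : ε' = false := by
            cases ε'
            · rfl
            · exact absurd (hε' rfl) Bool.false_ne_true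
          rw [c_zero_iff, hε'f] at hc'
          have hev : Even A'.card := by
            by_contra hodd
            rw [decide_eq_true hodd] at hc'
            exact Bool.false_ne_true hc'
          have hle := Finset.card_le_card hA'
          have hpos := hA'ne.card_pos
          have hA'2 : A'.card = 2 := by
            obtain ⟨k, hk⟩ := hev
            omega
          have hAeq : A' = A := Finset.eq_of_subset_of_card_le hA' (by omega)
          exact hne ⟨hAeq, hAeq, hε'f⟩
        · have hcov := Finset.card_le_card
            ((cover rfl).trans (Finset.union_subset_union hA' hB'))
          rw [Finset.card_univ, Fintype.card_fin, Finset.union_self, hA2] at hcov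
          omega
    · -- A = Bᶜ
      constructor
      · refine (zs_mkS hr1 _ _ _).mpr (Or.inr ⟨rfl, ?_⟩)
        rw [c_one_iff]
        exact hε
      · intro T hT hzsT
        obtain ⟨A', B', ε', rfl⟩ := exists_mkS T
        rw [mkS_ssubset] at hT
        obtain ⟨⟨hA', hB', hε'⟩, hne⟩ := hT
        rcases (zs_mkS hr1 A' B' ε').mp hzsT with ⟨rfl, hA'ne, hc'⟩ | ⟨rfl, hc'⟩
        · obtain ⟨j, hj⟩ := hA'ne
          have hjA : j ∈ Bᶜ := hA' hj
          have hjB : j ∈ B := hB' hj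
          exact absurd hjB (Finset.mem_compl.mp hjA)
        · -- A' = B'ᶜ, A' ⊆ Bᶜ, B' ⊆ B forces equality
          have hBB : B' = B := by
            apply subset_antisymm hB'
            intro x hx
            by_contra hx'
            have : x ∈ B'ᶜ := Finset.mem_compl.mpr hx'
            have : x ∈ Bᶜ := hA' this
            exact (Finset.mem_compl.mp this) hx
          subst hBB
          rw [c_one_iff] at hc'
          exact hne ⟨rfl, rfl, hc'.trans hε.symm⟩

end SpikeAux

namespace SpikeAux
variable {r : ℕ}

def F1 (r : ℕ) : Finset (Finset (SpikeIdx r)) :=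
  Finset.univ.image fun i : Fin r => mkS {i} {i} true

def F2 (r : ℕ) : Finset (Finset (SpikeIdx r)) :=
  (Finset.univ.powersetCard 2).image fun A : Finset (Fin r) => mkS A A false

def F3 (r : ℕ) : Finset (Finset (SpikeIdx r)) :=
  Finset.univ.image fun B : Finset (Fin r) => mkS Bᶜ B (decide (Even B.card))

lemma circuit_iff_mem (hr : 3 ≤ r) (S : Finset (SpikeIdx r)) :
    SpikeCircuit r S ↔ S ∈ F1 r ∪ F2 r ∪ F3 r := by
  obtain ⟨A, B, ε, rfl⟩ := exists_mkS S
  rw [spikeCircuit_iff_min, minZS_mkS hr]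
  simp only [Finset.mem_union, F1, F2, F3, Finset.mem_image, Finset.mem_powersetCard_univ]
  constructor
  · rintro (⟨rfl, h1, rfl⟩ | ⟨rfl, h2, rfl⟩ | ⟨rfl, hε⟩)
    · obtain ⟨i, rfl⟩ := Finset.card_eq_one.mp h1
      exact Or.inl (Or.inl ⟨i, Finset.mem_univ i, rfl⟩)
    · exact Or.inl (Or.inr ⟨A, h2, rfl⟩)
    · exact Or.inr ⟨B, Finset.mem_univ B, by rw [hε]⟩
  · rintro ((⟨i, -, h⟩ | ⟨A', hA', h⟩) | ⟨B', -, h⟩)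
    · obtain ⟨h1, h2, h3⟩ := mkS_inj.mp h
      subst h1; subst h2; subst h3
      exact Or.inl ⟨rfl, Finset.card_singleton i, rfl⟩
    · obtain ⟨h1, h2, h3⟩ := mkS_inj.mp h
      subst h1; subst h2; subst h3
      exact Or.inr (Or.inl ⟨rfl, hA', rfl⟩)
    · obtain ⟨h1, h2, h3⟩ := mkS_inj.mp h
      subst h2
      exact Or.inr (Or.inr ⟨h1.symm, h3.symm⟩)

lemma card_F1 : (F1 r).card = r := by
  rw [F1, Finset.card_image_of_injective _ ?_, Finset.card_univ, Fintype.card_fin]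
  intro i j h
  obtain ⟨h1, -, -⟩ := mkS_inj.mp h
  exact Finset.singleton_injective h1

lemma card_F2 : (F2 r).card = r.choose 2 := by
  rw [F2, Finset.card_image_of_injective _ ?_, Finset.card_powersetCard,
    Finset.card_univ, Fintype.card_fin]
  intro A A' h
  exact (mkS_inj.mp h).1

lemma card_F3 : (F3 r).card = 2 ^ r := by
  rw [F3, Finset.card_image_of_injective _ ?_, Finset.card_univ, Fintype.card_finset,
    Fintype.card_fin]
  intro B B' h
  exact (mkS_inj.mp h).2.1

lemma disj12 : Disjoint (F1 r) (F2 r) := by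
  rw [Finset.disjoint_left]
  rintro S h1 h2
  simp only [F1, F2, Finset.mem_image] at h1 h2
  obtain ⟨i, -, rfl⟩ := h1
  obtain ⟨A, -, h⟩ := h2
  exact Bool.false_ne_true (mkS_inj.mp h).2.2

lemma disj13 : Disjoint (F1 r) (F3 r) := by
  rw [Finset.disjoint_left]
  rintro S h1 h3
  simp only [F1, F3, Finset.mem_image] at h1 h3
  obtain ⟨i, -, rfl⟩ := h1
  obtain ⟨B, -, h⟩ := h3
  obtain ⟨hc, hb, -⟩ := mkS_inj.mp h
  have hiB : i ∈ B := hb ▸ Finset.mem_singleton_self i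
  have hiBc : i ∈ Bᶜ := hc ▸ Finset.mem_singleton_self i
  exact (Finset.mem_compl.mp hiBc) hiB

lemma disj23 : Disjoint (F2 r) (F3 r) := by
  rw [Finset.disjoint_left]
  rintro S h2 h3
  simp only [F2, F3, Finset.mem_image, Finset.mem_powersetCard_univ] at h2 h3
  obtain ⟨A, hA, rfl⟩ := h2
  obtain ⟨B, -, h⟩ := h3
  obtain ⟨hc, hb, -⟩ := mkS_inj.mp h
  have hAne : A.Nonempty := Finset.card_pos.mp (by omega)
  obtain ⟨j, hj⟩ := hAne
  have hjB : j ∈ B := hb ▸ hj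
  have hjBc : j ∈ Bᶜ := hc ▸ hj
  exact (Finset.mem_compl.mp hjBc) hjB

end SpikeAux

open SpikeAux in
theorem stmt_6 (r : ℕ) (hr : 3 ≤ r) :
    {S : Finset (SpikeIdx r) | SpikeCircuit r S}.ncard = 2 ^ r + r * (r + 1) / 2 := by
  have hset : {S : Finset (SpikeIdx r) | SpikeCircuit r S} = ↑(F1 r ∪ F2 r ∪ F3 r) := by
    ext S
    rw [Set.mem_setOf_eq, Finset.mem_coe]
    exact circuit_iff_mem hr S
  rw [hset, Set.ncard_coe_finset]
  rw [Finset.card_union_of_disjoint (by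
      rw [Finset.disjoint_union_left]; exact ⟨disj13, disj23⟩),
    Finset.card_union_of_disjoint disj12, card_F1, card_F2, card_F3]
  have h1 : r * (r + 1) / 2 = (r + 1).choose 2 := by
    rw [Nat.choose_two_right, Nat.add_sub_cancel, Nat.mul_comm]
  have h2 : (r + 1).choose 2 = r.choose 1 + r.choose 2 := Nat.choose_succ_succ r 1
  rw [h1, h2, Nat.choose_one_right]
  ring

end
end

section
/- Let $r \geq 3$ be even, let $\varphi_3$ be the transversals of the pairs $\{x_i,y_i\}$, $1 \leq i \leq r$, with an odd number of $y_i$'s, and define $\varphi_4 = \{(E \setminus C) \triangle \{x_{r-1},y_{r-1}\} : C \in \varphi_3\}$ where $E = \{x_1,\dots,x_r,y_1,\dots,y_r,t\}$. Then the intersection of any two distinct members of $\varphi_4$ has odd cardinality. -/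
open Finset

/-- |A ∆ B| + 2|A ∩ B| = |A| + |B| -/
lemma card_symmDiff_aux {α : Type*} [DecidableEq α] (A B : Finset α) :
    (symmDiff A B).card + 2 * (A ∩ B).card = A.card + B.card := by
  have h1 : symmDiff A B ∪ (A ∩ B) = A ∪ B := by
    have := symmDiff_sup_inf (a := A) (b := B)
    simpa [Finset.sup_eq_union, Finset.inf_eq_inter] using this
  have h2 : Disjoint (symmDiff A B) (A ∩ B) := disjoint_symmDiff_inf A B
  have h3 := Finset.card_union_of_disjoint h2
  rw [h1] at h3
  have h4 := Finset.card_union_add_card_inter A B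
  omega

lemma pair_lemma {α : Type*} [DecidableEq α] {C : Finset α} {a b : α} (hab : a ≠ b)
    (h : (C ∩ {a, b}).card = 1) : a ∈ C ↔ b ∉ C := by
  by_cases ha : a ∈ C <;> by_cases hb : b ∈ C
  · exfalso
    have hs : ({a, b} : Finset α) ⊆ C ∩ {a, b} := by
      intro z hz
      simp only [Finset.mem_insert, Finset.mem_singleton] at hz
      rcases hz with rfl | rfl <;> simp [Finset.mem_inter, ha, hb]
    have h2 := Finset.card_le_card hs
    rw [Finset.card_pair hab] at h2
    omega
  · simp [ha, hb]
  · simp [ha, hb]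
  · exfalso
    have hs : C ∩ {a, b} = ∅ := by
      rw [Finset.eq_empty_iff_forall_notMem]
      intro z hz
      simp only [Finset.mem_inter, Finset.mem_insert, Finset.mem_singleton] at hz
      rcases hz with ⟨hz1, rfl | rfl⟩ <;> contradiction
    rw [hs] at h
    simp at h

set_option maxHeartbeats 1000000 in
theorem stmt_16 {α : Type*} [DecidableEq α] (r : ℕ) (hr : 3 ≤ r) (heven : Even r)
    (x y : Fin r → α) (t : α)
    (hinj : Function.Injective (Sum.elim x (Sum.elim y (fun _ : Unit => t))))
    (C₁ C₂ : Finset α) (h₁ : C₁ ∈ phi3 r x y t) (h₂ : C₂ ∈ phi3 r x y t)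
    (k : Fin r) (hk : (k : ℕ) = r - 2)
    (hne : symmDiff (groundE r x y t \ C₁) ({x k, y k} : Finset α)
         ≠ symmDiff (groundE r x y t \ C₂) ({x k, y k} : Finset α)) :
    Odd (((symmDiff (groundE r x y t \ C₁) ({x k, y k} : Finset α)) ∩
          (symmDiff (groundE r x y t \ C₂) ({x k, y k} : Finset α))).card) := by
  classical
  obtain ⟨hsub₁, hcard₁, hodd₁, hone₁⟩ := h₁
  obtain ⟨hsub₂, hcard₂, hodd₂, hone₂⟩ := h₂
  -- basic injectivity facts
  have hx : Function.Injective x := fun i j h => by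
    have := hinj (a₁ := Sum.inl i) (a₂ := Sum.inl j) (by simpa using h)
    simpa using this
  have hy : Function.Injective y := fun i j h => by
    have := hinj (a₁ := Sum.inr (Sum.inl i)) (a₂ := Sum.inr (Sum.inl j)) (by simpa using h)
    simpa using this
  have hxy : ∀ i j, x i ≠ y j := fun i j h => by
    have := hinj (a₁ := Sum.inl i) (a₂ := Sum.inr (Sum.inl j)) (by simpa using h)
    simp at this
  have hxt : ∀ i, x i ≠ t := fun i h => by
    have := hinj (a₁ := Sum.inl i) (a₂ := Sum.inr (Sum.inr ())) (by simpa using h)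
    simp at this
  have hyt : ∀ i, y i ≠ t := fun i h => by
    have := hinj (a₁ := Sum.inr (Sum.inl i)) (a₂ := Sum.inr (Sum.inr ())) (by simpa using h)
    simp at this
  set X : Finset α := Finset.univ.image x with hXdef
  set Y : Finset α := Finset.univ.image y with hYdef
  set E : Finset α := groundE r x y t with hEdef
  set P : Finset α := ({x k, y k} : Finset α) with hPdef
  have hXcard : X.card = r := by
    rw [hXdef, Finset.card_image_of_injective _ hx, Finset.card_univ, Fintype.card_fin]
  have hYcard : Y.card = r := by
    rw [hYdef, Finset.card_image_of_injective _ hy, Finset.card_univ, Fintype.card_fin]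
  have hXY : Disjoint X Y := by
    rw [Finset.disjoint_left]
    rintro a ha hb
    simp only [hXdef, hYdef, Finset.mem_image, Finset.mem_univ, true_and] at ha hb
    obtain ⟨i, rfl⟩ := ha
    obtain ⟨j, hj⟩ := hb
    exact hxy i j hj.symm
  have htXY : t ∉ X ∪ Y := by
    simp only [Finset.mem_union, hXdef, hYdef, Finset.mem_image, Finset.mem_univ, true_and]
    rintro (⟨i, hi⟩ | ⟨i, hi⟩)
    · exact hxt i hi
    · exact hyt i hi
  have hEXY : E = (X ∪ Y) ∪ {t} := rfl
  have hEcard : E.card = 2 * r + 1 := by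
    rw [hEXY, Finset.card_union_of_disjoint (by simpa using htXY),
      Finset.card_union_of_disjoint hXY, hXcard, hYcard, Finset.card_singleton]
    ring
  -- transversals are contained in X ∪ Y
  have hCXY : ∀ C : Finset α, C ⊆ E → C.card = r →
      (∀ i : Fin r, (C ∩ {x i, y i}).card = 1) → C ⊆ X ∪ Y := by
    intro C hsub hcard hone
    have hbu : C ∩ (X ∪ Y) = Finset.univ.biUnion (fun i : Fin r => C ∩ {x i, y i}) := by
      ext a
      simp only [Finset.mem_inter, Finset.mem_union, hXdef, hYdef, Finset.mem_image,
        Finset.mem_biUnion, Finset.mem_univ, true_and, Finset.mem_insert, Finset.mem_singleton]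
      constructor
      · rintro ⟨ha, ⟨i, rfl⟩ | ⟨i, rfl⟩⟩
        · exact ⟨i, ha, Or.inl rfl⟩
        · exact ⟨i, ha, Or.inr rfl⟩
      · rintro ⟨i, ha, rfl | rfl⟩
        · exact ⟨ha, Or.inl ⟨i, rfl⟩⟩
        · exact ⟨ha, Or.inr ⟨i, rfl⟩⟩
    have hdisj : ∀ i ∈ (Finset.univ : Finset (Fin r)), ∀ j ∈ Finset.univ, i ≠ j →
        Disjoint (C ∩ {x i, y i}) (C ∩ {x j, y j}) := by
      intro i _ j _ hij
      rw [Finset.disjoint_left]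
      intro a ha hb
      simp only [Finset.mem_inter, Finset.mem_insert, Finset.mem_singleton] at ha hb
      rcases ha.2 with rfl | rfl <;> rcases hb.2 with h | h
      · exact hij (hx h)
      · exact hxy i j h
      · exact hxy j i h.symm
      · exact hij (hy h)
    have hcount : (C ∩ (X ∪ Y)).card = r := by
      rw [hbu, Finset.card_biUnion hdisj]
      simp [hone]
    have : C ∩ (X ∪ Y) = C := by
      apply Finset.eq_of_subset_of_card_le Finset.inter_subset_left
      rw [hcount, hcard]
    rw [← this]
    exact Finset.inter_subset_right
  have hC₁XY : C₁ ⊆ X ∪ Y := hCXY C₁ hsub₁ hcard₁ hone₁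
  have hC₂XY : C₂ ⊆ X ∪ Y := hCXY C₂ hsub₂ hcard₂ hone₂
  -- the symmetric difference S = C₁ ∆ C₂
  set S : Finset α := symmDiff C₁ C₂ with hSdef
  have hSXY : S ⊆ X ∪ Y := by
    intro a ha
    rw [hSdef, Finset.mem_symmDiff] at ha
    rcases ha with ⟨ha, _⟩ | ⟨ha, _⟩
    · exact hC₁XY ha
    · exact hC₂XY ha
  have hiff : ∀ i : Fin r, (x i ∈ S ↔ y i ∈ S) := by
    intro i
    have p1 := pair_lemma (hxy i i) (hone₁ i)
    have p2 := pair_lemma (hxy i i) (hone₂ i)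
    rw [hSdef, Finset.mem_symmDiff, Finset.mem_symmDiff]
    tauto
  have hTX : S ∩ X = (Finset.univ.filter (fun i => x i ∈ S)).image x := by
    ext a
    simp only [Finset.mem_inter, hXdef, Finset.mem_image, Finset.mem_filter, Finset.mem_univ,
      true_and]
    constructor
    · rintro ⟨ha, i, rfl⟩
      exact ⟨i, ha, rfl⟩
    · rintro ⟨i, hi, rfl⟩
      exact ⟨hi, i, rfl⟩
  have hTY : S ∩ Y = (Finset.univ.filter (fun i => x i ∈ S)).image y := by
    ext a
    simp only [Finset.mem_inter, hYdef, Finset.mem_image, Finset.mem_filter, Finset.mem_univ,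
      true_and]
    constructor
    · rintro ⟨ha, i, rfl⟩
      exact ⟨i, (hiff i).mpr ha, rfl⟩
    · rintro ⟨i, hi, rfl⟩
      exact ⟨(hiff i).mp hi, i, rfl⟩
  have hcardXY : (S ∩ X).card = (S ∩ Y).card := by
    rw [hTX, hTY, Finset.card_image_of_injective _ hx, Finset.card_image_of_injective _ hy]
  have hSsplit : S.card = (S ∩ X).card + (S ∩ Y).card := by
    have h1 : S ∩ X ∪ S ∩ Y = S := by
      rw [← Finset.inter_union_distrib_left, Finset.inter_eq_left.mpr hSXY]
    have h2 : Disjoint (S ∩ X) (S ∩ Y) :=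
      hXY.mono Finset.inter_subset_right Finset.inter_subset_right
    have h3 := Finset.card_union_of_disjoint h2
    rw [h1] at h3
    exact h3
  -- (S ∩ Y) has even cardinality
  have hSY : S ∩ Y = symmDiff (C₁ ∩ Y) (C₂ ∩ Y) := by
    ext a
    rw [hSdef]
    simp only [Finset.mem_inter, Finset.mem_symmDiff]
    tauto
  have hSYeven : Even ((S ∩ Y).card) := by
    have := card_symmDiff_aux (C₁ ∩ Y) (C₂ ∩ Y)
    rw [← hSY] at this
    obtain ⟨m, hm⟩ := hodd₁
    obtain ⟨n, hn⟩ := hodd₂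
    rw [Nat.even_iff]
    omega
  -- main cardinality computations
  set A : Finset α := symmDiff (E \ C₁) P with hAdef
  set B : Finset α := symmDiff (E \ C₂) P with hBdef
  have hAB : symmDiff A B = S := by
    rw [hAdef, hBdef, symmDiff_symmDiff_symmDiff_comm, symmDiff_self, symmDiff_bot]
    ext a
    rw [hSdef]
    simp only [Finset.mem_symmDiff, Finset.mem_sdiff]
    constructor
    · rintro (⟨⟨haE, ha1⟩, ha2⟩ | ⟨⟨haE, ha2⟩, ha1⟩)
      · right
        exact ⟨by tauto, ha1⟩
      · left
        exact ⟨by tauto, ha2⟩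
    · rintro (⟨ha1, ha2⟩ | ⟨ha2, ha1⟩)
      · right
        exact ⟨⟨hsub₁ ha1, ha2⟩, fun h => h.2 ha1⟩
      · left
        exact ⟨⟨hsub₂ ha2, ha1⟩, fun h => h.2 ha2⟩
  have hPE : P ⊆ E := by
    intro a ha
    rw [hPdef] at ha
    simp only [Finset.mem_insert, Finset.mem_singleton] at ha
    rw [hEXY]
    rcases ha with rfl | rfl
    · exact Finset.mem_union_left _ (Finset.mem_union_left _ (by simp [hXdef]))
    · exact Finset.mem_union_left _ (Finset.mem_union_right _ (by simp [hYdef]))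
  have hPcard : P.card = 2 := Finset.card_pair (hxy k k)
  have hcardA : ∀ C : Finset α, C ⊆ E → C.card = r → (C ∩ P).card = 1 →
      (symmDiff (E \ C) P).card = r + 1 := by
    intro C hsub hcard honeP
    have h1 : (E \ C).card = r + 1 := by
      rw [Finset.card_sdiff_of_subset hsub, hEcard, hcard]
      omega
    have h2 : (E \ C) ∩ P = P \ C := by
      ext a
      simp only [Finset.mem_inter, Finset.mem_sdiff]
      exact ⟨fun ⟨⟨_, h⟩, hp⟩ => ⟨hp, h⟩, fun ⟨hp, h⟩ => ⟨⟨hPE hp, h⟩, hp⟩⟩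
    have h3 : (P \ C).card = 1 := by
      have := Finset.card_sdiff_add_card_inter P C
      rw [Finset.inter_comm] at this
      omega
    have h4 := card_symmDiff_aux (E \ C) P
    rw [h2, h3, h1, hPcard] at h4
    omega
  have hA : A.card = r + 1 := hcardA C₁ hsub₁ hcard₁ (hone₁ k)
  have hB : B.card = r + 1 := hcardA C₂ hsub₂ hcard₂ (hone₂ k)
  have hfin := card_symmDiff_aux A B
  rw [hAB, hA, hB, hSsplit, hcardXY] at hfin
  obtain ⟨m, hm⟩ := hSYeven
  obtain ⟨n, hn⟩ := heven
  show Odd ((A ∩ B).card)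
  rw [Nat.odd_iff]
  omega
end
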